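/- Let P be a field, H a commutative P-algebra, n : ℕ, and I an ideal of MvPolynomial (Fin n) P. Then I is H-closed (i.e., the underlying set of I equals its H-closure I''_H) if and only if there exist an index type J and an injective P-algebra homomorphism from MvPolynomial (Fin n) P ⧸ I into the power algebra J → H. -/

import Mathlib

open MvPolynomial

universe u v

/-- The `H`-closure `T''_H` of a set `T` of polynomials: all `f` such that every
point `μ : Fin n → H` annihilating `T` also annihilates `f`. -/
def hClosure (P : Type u) [Field P] (H : Type v) [CommRing H] [Algebra P H]
    (n : ℕ) (T : Set (MvPolynomial (Fin n) P)) : Set (MvPolynomial (Fin n) P) :=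
  {f | ∀ μ : Fin n → H, (∀ g ∈ T, aeval μ g = 0) → aeval μ f = 0}

/-- an ideal `I` is `H`-closed iff the quotient algebra embeds into
some power `J → H` of `H`. -/
theorem isHClosed_iff_embeds_in_power (P : Type u) [Field P]
    (H : Type v) [CommRing H] [Algebra P H]
    (n : ℕ) (I : Ideal (MvPolynomial (Fin n) P)) :
    (I : Set (MvPolynomial (Fin n) P)) = hClosure P H n ↑I
      ↔
    ∃ (J : Type (max u v))
      (g : (MvPolynomial (Fin n) P ⧸ I) →ₐ[P] (J → H)),
      Function.Injective g := by
  constructor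
  · intro hI
    refine ⟨ULift.{u} {μ : Fin n → H // ∀ g ∈ (I : Set (MvPolynomial (Fin n) P)), aeval μ g = 0}, ?_, ?_⟩
    · exact Ideal.Quotient.liftₐ I
        (Pi.algHom P (fun _ => H) (fun j => aeval j.down.1))
        (fun a ha => by
          funext j
          exact j.down.2 a ha)
    · rw [injective_iff_map_eq_zero]
      intro a ha
      obtain ⟨f, rfl⟩ := Ideal.Quotient.mk_surjective a
      rw [Ideal.Quotient.eq_zero_iff_mem, ← SetLike.mem_coe, hI]
      intro μ hμ
      have := congrFun ha ⟨⟨μ, hμ⟩⟩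
      exact this
  · rintro ⟨J, g, hg⟩
    apply Set.Subset.antisymm
    · intro f hf μ hμ
      exact hμ f hf
    · intro f hf
      set φ : MvPolynomial (Fin n) P →ₐ[P] (J → H) :=
        g.comp (Ideal.Quotient.mkₐ P I) with hφ
      have key : ∀ p : MvPolynomial (Fin n) P, ∀ j : J,
          aeval (fun i => φ (X i) j) p = φ p j := by
        intro p j
        have : (Pi.evalAlgHom P (fun _ => H) j).comp φ =
            aeval (fun i => φ (X i) j) := by
          apply MvPolynomial.algHom_ext
          intro i
          simp
        exact (AlgHom.congr_fun this p).symm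
      have hφf : φ f = 0 := by
        funext j
        have hvan : ∀ q ∈ (I : Set (MvPolynomial (Fin n) P)),
            aeval (fun i => φ (X i) j) q = 0 := by
          intro q hq
          rw [key]
          have : φ q = 0 := by
            simp [hφ, Ideal.Quotient.mkₐ_eq_mk, Ideal.Quotient.eq_zero_iff_mem.mpr hq]
          simp [this]
        have := hf (fun i => φ (X i) j) hvan
        rw [key] at this
        simpa using this
      have : Ideal.Quotient.mk I f = 0 := by
        apply hg
        simpa [hφ] using hφf
      rwa [Ideal.Quotient.eq_zero_iff_mem] at this
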